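/- The first three discretized Keiper coefficients have the explicit values Λ_1 = (3/2)·log(π/3), Λ_2 = (5/24)·log( (2/5)^7 · 3^{11} / π^4 ), and Λ_3 = (21/80)·log( 5^{25}·π^8 / (2^3·(3^2·7)^{11}) ). -/

import Mathlib

open Complex Finset Real

/-- The completed zeta function `2ξ(x) := x(x-1)·π^(-x/2)·Γ(x/2)·ζ(x)`. -/
noncomputable def twoXi (x : ℂ) : ℂ :=
  x * (x - 1) * (Real.pi : ℂ) ^ (-x / 2) * Complex.Gamma (x / 2) * riemannZeta x

/-- The coefficient `A_{nm} := Γ(n+m+1/2) / ((2m-1)·(n-m)!·m!·Γ(m+1/2))`. -/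
noncomputable def Acoef (n m : ℕ) : ℝ :=
  Real.Gamma ((n : ℝ) + m + 1 / 2) /
    ((2 * (m : ℝ) - 1) * (Nat.factorial (n - m) : ℝ) * (Nat.factorial m : ℝ) *
      Real.Gamma ((m : ℝ) + 1 / 2))

/-- The discretized Keiper coefficient
`Λ_n := (-1)^n · Σ_{m=1}^n (-1)^m · A_{nm} · log(2ξ(2m))` (real logarithm; the values
`2ξ(2m)` are real and positive). -/
noncomputable def LambdaSeq (n : ℕ) : ℝ :=
  (-1 : ℝ) ^ n * ∑ m ∈ Finset.Icc 1 n, (-1 : ℝ) ^ m * Acoef n m *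
    Real.log ((twoXi (2 * m)).re)

lemma zeta_six' : riemannZeta 6 = (Real.pi:ℂ)^6 / 945 := by
  have c52 : Nat.choose 5 2 = 10 := by decide
  have c53 : Nat.choose 5 3 = 10 := by decide
  have c62 : Nat.choose 6 2 = 15 := by decide
  have c63 : Nat.choose 6 3 = 20 := by decide
  have c64 : Nat.choose 6 4 = 15 := by decide
  have b5 : bernoulli' 5 = 0 := by
    rw [bernoulli'_def]; norm_num [Finset.sum_range_succ, c52, c53]
  have b6 : bernoulli' 6 = 1/42 := by
    rw [bernoulli'_def]; norm_num [Finset.sum_range_succ, c62, c63, c64, b5]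
  have hb : bernoulli 6 = 1/42 := by
    rw [bernoulli_eq_bernoulli'_of_ne_one (by norm_num), b6]
  have h := riemannZeta_two_mul_nat (k := 3) (by norm_num)
  norm_num [hb] at h
  rw [h]; norm_num [Nat.factorial]; ring

lemma xi2 : (twoXi 2).re = Real.pi / 3 := by
  have hπ : (Real.pi : ℂ) ≠ 0 := Complex.ofReal_ne_zero.mpr Real.pi_ne_zero
  have : twoXi 2 = ((Real.pi / 3 : ℝ) : ℂ) := by
    rw [twoXi, riemannZeta_two, show (-(2:ℂ)/2) = -1 by norm_num, Complex.cpow_neg_one,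
      show ((2:ℂ)/2) = 1 by norm_num, Complex.Gamma_one]
    field_simp; push_cast; ring
  rw [this, Complex.ofReal_re]

lemma xi4 : (twoXi 4).re = 2 * Real.pi ^ 2 / 15 := by
  have hπ : (Real.pi : ℂ) ≠ 0 := Complex.ofReal_ne_zero.mpr Real.pi_ne_zero
  have hg : Complex.Gamma 2 = 1 := by
    simpa using Complex.Gamma_nat_eq_factorial 1
  have : twoXi 4 = ((2 * Real.pi ^ 2 / 15 : ℝ) : ℂ) := by
    rw [twoXi, riemannZeta_four, show (-(4:ℂ)/2) = -((2:ℕ):ℂ) by norm_num,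
      show ((4:ℂ)/2) = 2 by norm_num, hg,
      Complex.cpow_neg, Complex.cpow_natCast]
    push_cast; field_simp; ring
  rw [this, Complex.ofReal_re]

lemma xi6 : (twoXi 6).re = 4 * Real.pi ^ 3 / 63 := by
  have hπ : (Real.pi : ℂ) ≠ 0 := Complex.ofReal_ne_zero.mpr Real.pi_ne_zero
  have hg : Complex.Gamma 3 = 2 := by
    simpa [Nat.factorial] using Complex.Gamma_nat_eq_factorial 2
  have : twoXi 6 = ((4 * Real.pi ^ 3 / 63 : ℝ) : ℂ) := by
    rw [twoXi, zeta_six', show (-(6:ℂ)/2) = -((3:ℕ):ℂ) by norm_num,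
      show ((6:ℂ)/2) = 3 by norm_num, hg,
      Complex.cpow_neg, Complex.cpow_natCast]
    push_cast; field_simp; ring
  rw [this, Complex.ofReal_re]

lemma sqrtpi_ne : Real.sqrt Real.pi ≠ 0 :=
  ne_of_gt (Real.sqrt_pos.mpr Real.pi_pos)

lemma g32 : Real.Gamma (3/2) = (1/2) * Real.sqrt Real.pi := by
  rw [show (3/2:ℝ) = 1/2 + 1 by norm_num, Real.Gamma_add_one (by norm_num),
    Real.Gamma_one_half_eq]

lemma g52 : Real.Gamma (5/2) = (3/4) * Real.sqrt Real.pi := by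
  rw [show (5/2:ℝ) = 3/2 + 1 by norm_num, Real.Gamma_add_one (by norm_num), g32]; ring

lemma g72 : Real.Gamma (7/2) = (15/8) * Real.sqrt Real.pi := by
  rw [show (7/2:ℝ) = 5/2 + 1 by norm_num, Real.Gamma_add_one (by norm_num), g52]; ring

lemma g92 : Real.Gamma (9/2) = (105/16) * Real.sqrt Real.pi := by
  rw [show (9/2:ℝ) = 7/2 + 1 by norm_num, Real.Gamma_add_one (by norm_num), g72]; ring

lemma g112 : Real.Gamma (11/2) = (945/32) * Real.sqrt Real.pi := by
  rw [show (11/2:ℝ) = 9/2 + 1 by norm_num, Real.Gamma_add_one (by norm_num), g92]; ring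

lemma g132 : Real.Gamma (13/2) = (10395/64) * Real.sqrt Real.pi := by
  rw [show (13/2:ℝ) = 11/2 + 1 by norm_num, Real.Gamma_add_one (by norm_num), g112]; ring

lemma A11 : Acoef 1 1 = 3/2 := by
  rw [Acoef]; norm_num [Nat.factorial]
  rw [g52, g32]; field_simp [sqrtpi_ne]; ring

lemma A21 : Acoef 2 1 = 15/4 := by
  rw [Acoef]; norm_num [Nat.factorial]
  rw [g72, g32]; field_simp [sqrtpi_ne]; ring

lemma A22 : Acoef 2 2 = 35/24 := by
  rw [Acoef]; norm_num [Nat.factorial]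
  rw [g92, g52]; field_simp [sqrtpi_ne]; ring

lemma A31 : Acoef 3 1 = 105/16 := by
  rw [Acoef]; norm_num [Nat.factorial]
  rw [g92, g32]; field_simp [sqrtpi_ne]

lemma A32 : Acoef 3 2 = 105/16 := by
  rw [Acoef]; norm_num [Nat.factorial]
  rw [g112, g52]; field_simp [sqrtpi_ne]; ring

lemma A33 : Acoef 3 3 = 231/80 := by
  rw [Acoef]; norm_num [Nat.factorial]
  rw [g132, g72]; field_simp [sqrtpi_ne]; ring

lemma log2xi2 : Real.log (Real.pi / 3) = Real.log Real.pi - Real.log 3 :=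
  Real.log_div (ne_of_gt Real.pi_pos) (by norm_num)

lemma log2xi4 : Real.log (2 * Real.pi ^ 2 / 15) =
    Real.log 2 + 2 * Real.log Real.pi - (Real.log 3 + Real.log 5) := by
  rw [Real.log_div (by positivity) (by norm_num),
    Real.log_mul (by norm_num) (by positivity), Real.log_pow,
    show (15:ℝ) = 3 * 5 by norm_num, Real.log_mul (by norm_num) (by norm_num)]
  push_cast; ring

lemma log2xi6 : Real.log (4 * Real.pi ^ 3 / 63) =
    2 * Real.log 2 + 3 * Real.log Real.pi - (2 * Real.log 3 + Real.log 7) := by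
  rw [Real.log_div (by positivity) (by norm_num),
    Real.log_mul (by norm_num) (by positivity), Real.log_pow,
    show (4:ℝ) = 2 ^ 2 by norm_num, Real.log_pow,
    show (63:ℝ) = 3 ^ 2 * 7 by norm_num,
    Real.log_mul (by norm_num) (by norm_num), Real.log_pow]
  push_cast; ring

lemma logR2 : Real.log ((2 / 5 : ℝ) ^ 7 * 3 ^ 11 / Real.pi ^ 4) =
    7 * (Real.log 2 - Real.log 5) + 11 * Real.log 3 - 4 * Real.log Real.pi := by
  rw [Real.log_div (by positivity) (by positivity),
    Real.log_mul (by positivity) (by norm_num), Real.log_pow, Real.log_pow, Real.log_pow,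
    Real.log_div (by norm_num) (by norm_num)]
  push_cast; ring

lemma logR3 : Real.log ((5:ℝ) ^ 25 * Real.pi ^ 8 / (2 ^ 3 * (3 ^ 2 * 7) ^ 11)) =
    25 * Real.log 5 + 8 * Real.log Real.pi -
      (3 * Real.log 2 + 11 * (2 * Real.log 3 + Real.log 7)) := by
  rw [Real.log_div (by positivity) (by norm_num),
    Real.log_mul (by norm_num) (by positivity), Real.log_pow, Real.log_pow,
    Real.log_mul (by norm_num) (by norm_num), Real.log_pow, Real.log_pow,
    Real.log_mul (by norm_num) (by norm_num), Real.log_pow]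
  push_cast; ring

/-- The explicit values `Λ_1 = (3/2)·log(π/3)`,
`Λ_2 = (5/24)·log((2/5)^7·3^11/π^4)` and `Λ_3 = (21/80)·log(5^25·π^8/(2^3·(3^2·7)^11))`. -/
theorem stmt_7 :
    LambdaSeq 1 = 3 / 2 * Real.log (Real.pi / 3) ∧
    LambdaSeq 2 = 5 / 24 * Real.log ((2 / 5) ^ 7 * 3 ^ 11 / Real.pi ^ 4) ∧
    LambdaSeq 3 = 21 / 80 * Real.log (5 ^ 25 * Real.pi ^ 8 / (2 ^ 3 * (3 ^ 2 * 7) ^ 11)) := by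
  refine ⟨?_, ?_, ?_⟩
  · rw [LambdaSeq, show Finset.Icc 1 1 = {1} from rfl, Finset.sum_singleton]
    norm_num [A11, xi2]
  · rw [LambdaSeq, show Finset.Icc 1 2 = {1, 2} from rfl,
      Finset.sum_insert (by decide), Finset.sum_singleton, logR2]
    norm_num [A21, A22, xi2, xi4]
    rw [log2xi2, log2xi4]
    ring
  · rw [LambdaSeq, show Finset.Icc 1 3 = {1, 2, 3} from rfl,
      Finset.sum_insert (by decide), Finset.sum_insert (by decide), Finset.sum_singleton, logR3]
    norm_num [A31, A32, A33, xi2, xi4, xi6]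
    rw [log2xi2, log2xi4, log2xi6]
    ring
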